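/- Let β = −1/2 and let f(x) = Σ_{i,j} a_{ij}x_i x_j + Σ_i b_i x_i + c be a polynomial of degree at most 2 on ℝ⁴. Then there exist real constants a₀, ã_{ij}, b̃_i, c̃ such that the function q(x) = a₀|x|² + (Σ_{i,j} ã_{ij}x_i x_j + Σ_i b̃_i x_i + c̃) log|x| satisfies Δ²(q(x)|x|²) = f(x)|x|^{−2} for all x ∈ ℝ⁴ \ {0}. -/

import Mathlib

open MeasureTheory Real Filter

/-- The Euclidean Laplacian on `ℝⁿ`: the sum of second partial derivatives. -/
noncomputable def laplacianE {n : ℕ} (f : EuclideanSpace ℝ (Fin n) → ℝ)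
    (x : EuclideanSpace ℝ (Fin n)) : ℝ :=
  ∑ i : Fin n, fderiv ℝ (fun y => fderiv ℝ f y (EuclideanSpace.single i 1)) x
    (EuclideanSpace.single i 1)

noncomputable section
abbrev E4 : Type := EuclideanSpace ℝ (Fin 4)
def ee (i : Fin 4) : E4 := EuclideanSpace.single i 1
def dd (i j : Fin 4) : ℝ := if i = j then 1 else 0
noncomputable def cml (v : Fin 4 → ℝ) : E4 →L[ℝ] ℝ := ∑ j, v j • (EuclideanSpace.proj j : E4 →L[ℝ] ℝ)

lemma cml_apply (v : Fin 4 → ℝ) (y : E4) : cml v y = ∑ j, v j * y j := by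
  simp [cml]

lemma cml_ee (v : Fin 4 → ℝ) (i : Fin 4) : cml v (ee i) = v i := by
  rw [cml_apply]
  simp [ee, EuclideanSpace.single_apply]

def HG (f : E4 → ℝ) (g : E4 → Fin 4 → ℝ) : Prop :=
  ∀ ⦃y : E4⦄, y ≠ 0 → HasFDerivAt f (cml (g y)) y

lemma cml_add (v w : Fin 4 → ℝ) : cml (fun j => v j + w j) = cml v + cml w := by
  ext z; simp [cml_apply, add_mul, Finset.sum_add_distrib]

lemma cml_smul (c : ℝ) (v : Fin 4 → ℝ) : cml (fun j => c * v j) = c • cml v := by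
  ext z; simp [cml_apply, Finset.mul_sum, mul_assoc]

lemma HG.const (c : ℝ) : HG (fun _ => c) (fun _ _ => 0) := by
  intro y _
  have : cml (fun _ => (0:ℝ)) = 0 := by ext z; simp [cml_apply]
  rw [this]; exact hasFDerivAt_const _ _

lemma HG.coord (k : Fin 4) : HG (fun y => y k) (fun _ j => dd j k) := by
  intro y _
  have : cml (fun j => dd j k) = (EuclideanSpace.proj k : E4 →L[ℝ] ℝ) := by
    ext z; simp [cml_apply, dd, ite_mul, Finset.sum_ite_eq]
  rw [this]; exact (EuclideanSpace.proj k : E4 →L[ℝ] ℝ).hasFDerivAt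

lemma HG.add {f₁ f₂ g₁ g₂} (h₁ : HG f₁ g₁) (h₂ : HG f₂ g₂) :
    HG (fun y => f₁ y + f₂ y) (fun y j => g₁ y j + g₂ y j) := by
  intro y hy; rw [cml_add]; exact (h₁ hy).add (h₂ hy)

lemma HG.mul {f₁ f₂ g₁ g₂} (h₁ : HG f₁ g₁) (h₂ : HG f₂ g₂) :
    HG (fun y => f₁ y * f₂ y) (fun y j => f₁ y * g₂ y j + f₂ y * g₁ y j) := by
  intro y hy; rw [cml_add, cml_smul, cml_smul]; exact (h₁ hy).mul (h₂ hy)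

lemma HG.smul (c : ℝ) {f g} (h : HG f g) : HG (fun y => c * f y) (fun y j => c * g y j) := by
  intro y hy; rw [cml_smul]; exact (h hy).const_mul c

lemma HG.log {f g} (h : HG f g) (hf : ∀ y : E4, y ≠ 0 → f y ≠ 0) :
    HG (fun y => Real.log (f y)) (fun y j => (f y)⁻¹ * g y j) := by
  intro y hy; rw [cml_smul]; exact (h hy).log (hf y hy)

lemma HG.inv {f g} (h : HG f g) (hf : ∀ y : E4, y ≠ 0 → f y ≠ 0) :
    HG (fun y => (f y)⁻¹) (fun y j => -((f y)^2)⁻¹ * g y j) := by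
  intro y hy; rw [cml_smul]
  exact (hasDerivAt_inv (hf y hy)).comp_hasFDerivAt y (h hy)

lemma HG.sum {ι : Type*} (s : Finset ι) {f : ι → E4 → ℝ} {g : ι → E4 → Fin 4 → ℝ}
    (h : ∀ k ∈ s, HG (f k) (g k)) :
    HG (fun y => ∑ k ∈ s, f k y) (fun y j => ∑ k ∈ s, g k y j) := by
  intro y hy
  have : cml (fun j => ∑ k ∈ s, g k y j) = ∑ k ∈ s, cml (g k y) := by
    ext z; simp [cml_apply, Finset.sum_mul]; rw [Finset.sum_comm]
  rw [this]; exact HasFDerivAt.fun_sum (fun k hk => h k hk hy)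

lemma HG.congr {f g g'} (h : HG f g) (e : ∀ y : E4, y ≠ 0 → ∀ j, g y j = g' y j) : HG f g' := by
  intro y hy
  have : cml (g' y) = cml (g y) := by congr 1; funext j; rw [e y hy j]
  rw [this]; exact h hy

lemma HG.congr_fun {f f' g} (h : HG f g) (e : ∀ y : E4, y ≠ 0 → f y = f' y) : HG f' g := by
  intro y hy
  refine (h hy).congr_of_eventuallyEq ?_
  filter_upwards [IsOpen.mem_nhds isOpen_compl_singleton hy] with z hz
  exact (e z hz).symm

lemma HG.div_const {f g} (h : HG f g) (c : ℝ) :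
    HG (fun y => f y / c) (fun y j => g y j / c) := by
  intro y hy
  have h2 := HG.smul c⁻¹ h hy
  have e1 : (fun y : E4 => c⁻¹ * f y) = fun y => f y / c := by funext z; rw [div_eq_inv_mul]
  have e2 : (fun j => c⁻¹ * g y j) = fun j => g y j / c := by funext j; rw [div_eq_inv_mul]
  simp only [] at h2 ⊢
  rw [show (fun j => g y j / c) = (fun j => c⁻¹ * g y j) from (funext fun j => div_eq_inv_mul _ _)]
  exact h2.congr_of_eventuallyEq (Filter.Eventually.of_forall fun z => div_eq_inv_mul _ _)

def usq (y : E4) : ℝ := ∑ j, y j * y j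

lemma norm_sq_eq (y : E4) : ‖y‖ ^ 2 = usq y := by
  rw [EuclideanSpace.norm_eq, Real.sq_sqrt]
  · simp [usq, Real.norm_eq_abs, sq, abs_mul_abs_self]
  · positivity

lemma usq_pos {y : E4} (hy : y ≠ 0) : 0 < usq y := by
  rw [← norm_sq_eq]; exact pow_pos (norm_pos_iff.mpr hy) 2

lemma usq_ne {y : E4} (hy : y ≠ 0) : usq y ≠ 0 := ne_of_gt (usq_pos hy)

lemma log_norm {y : E4} (hy : y ≠ 0) : Real.log ‖y‖ = Real.log (usq y) / 2 := by
  rw [← norm_sq_eq, Real.log_pow]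
  push_cast; ring

lemma HG.usq : HG usq (fun y j => 2 * y j) := by
  have h := HG.sum Finset.univ (f := fun k (y : E4) => y k * y k)
    (g := fun k y j => y k * dd j k + y k * dd j k)
    (fun k _ => (HG.coord k).mul (HG.coord k))
  refine HG.congr h ?_
  intro y hy j
  rw [two_mul, Finset.sum_add_distrib]
  simp [dd, mul_ite, Finset.sum_ite_eq]

-- Laplacian evaluation
lemma lap_eq {f g} (hf : HG f g) {h : Fin 4 → E4 → Fin 4 → ℝ}
    (hg : ∀ i, HG (fun y => g y i) (h i)) {x : E4} (hx : x ≠ 0) :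
    laplacianE f x = ∑ i, h i x i := by
  unfold laplacianE
  refine Finset.sum_congr rfl fun i _ => ?_
  have h1 : (fun y => fderiv ℝ f y (EuclideanSpace.single i 1)) =ᶠ[nhds x]
      fun y => g y i := by
    filter_upwards [IsOpen.mem_nhds isOpen_compl_singleton hx] with z hz
    rw [(hf hz).fderiv]; exact cml_ee _ i
  rw [h1.fderiv_eq, (hg i hx).fderiv]
  exact cml_ee _ i

lemma lap_congr1 {f G : E4 → ℝ} (e : ∀ y : E4, y ≠ 0 → f y = G y) {x : E4} (hx : x ≠ 0) :
    laplacianE f x = laplacianE G x := by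
  unfold laplacianE
  refine Finset.sum_congr rfl fun i _ => ?_
  have h1 : (fun y => fderiv ℝ f y (EuclideanSpace.single i 1)) =ᶠ[nhds x]
      fun y => fderiv ℝ G y (EuclideanSpace.single i 1) := by
    filter_upwards [IsOpen.mem_nhds isOpen_compl_singleton hx] with z hz
    have h2 : f =ᶠ[nhds z] G := by
      filter_upwards [IsOpen.mem_nhds isOpen_compl_singleton hz] with w hw
      exact e w hw
    rw [h2.fderiv_eq]
  rw [h1.fderiv_eq]

def LD (f Lf : E4 → ℝ) : Prop :=
  ∃ (g : E4 → Fin 4 → ℝ) (h : Fin 4 → E4 → Fin 4 → ℝ), HG f g ∧ (∀ i, HG (fun y => g y i) (h i)) ∧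
    ∀ y : E4, y ≠ 0 → (∑ i, h i y i) = Lf y

lemma LD.lap {f Lf} (h : LD f Lf) {x : E4} (hx : x ≠ 0) : laplacianE f x = Lf x := by
  obtain ⟨g, h', h1, h2, h3⟩ := h
  rw [lap_eq h1 h2 hx]; exact h3 x hx

lemma LD.add {f₁ f₂ L₁ L₂} (h₁ : LD f₁ L₁) (h₂ : LD f₂ L₂) :
    LD (fun y => f₁ y + f₂ y) (fun y => L₁ y + L₂ y) := by
  obtain ⟨g₁, k₁, a₁, b₁, c₁⟩ := h₁
  obtain ⟨g₂, k₂, a₂, b₂, c₂⟩ := h₂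
  refine ⟨fun y j => g₁ y j + g₂ y j, fun i y j => k₁ i y j + k₂ i y j,
    a₁.add a₂, fun i => (b₁ i).add (b₂ i), fun y hy => ?_⟩
  rw [Finset.sum_add_distrib, c₁ y hy, c₂ y hy]

lemma LD.smul (c : ℝ) {f Lf} (h : LD f Lf) :
    LD (fun y => c * f y) (fun y => c * Lf y) := by
  obtain ⟨g, k, a, b, e⟩ := h
  refine ⟨fun y j => c * g y j, fun i y j => c * k i y j,
    HG.smul c a, fun i => HG.smul c (b i), fun y hy => ?_⟩
  rw [← Finset.mul_sum, e y hy]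

lemma LD.zero : LD (fun _ => 0) (fun _ => 0) :=
  ⟨fun _ _ => 0, fun _ _ _ => 0, HG.const 0, fun _ => HG.const 0, fun y hy => by simp⟩

lemma LD.sum {ι : Type*} (s : Finset ι) {f : ι → E4 → ℝ} {Lf : ι → E4 → ℝ}
    (h : ∀ k ∈ s, LD (f k) (Lf k)) :
    LD (fun y => ∑ k ∈ s, f k y) (fun y => ∑ k ∈ s, Lf k y) := by
  classical
  induction s using Finset.induction with
  | empty =>
    simp only [Finset.sum_empty]
    exact LD.zero
  | @insert k s' hk ih =>
    simp only [Finset.sum_insert hk]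
    exact (h k (Finset.mem_insert_self _ _)).add
      (ih (fun j hj => h j (Finset.mem_insert_of_mem hj)))

lemma LD.congr_fun {f f' Lf} (h : LD f Lf) (e : ∀ y : E4, y ≠ 0 → f y = f' y) : LD f' Lf := by
  obtain ⟨g, k, a, b, c⟩ := h
  exact ⟨g, k, a.congr_fun e, b, c⟩

lemma LD.congr_L {f Lf Lf'} (h : LD f Lf) (e : ∀ y : E4, y ≠ 0 → Lf y = Lf' y) : LD f Lf' := by
  obtain ⟨g, k, a, b, c⟩ := h
  exact ⟨g, k, a, b, fun y hy => (c y hy).trans (e y hy)⟩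

def LD2 (f K : E4 → ℝ) : Prop := ∃ H, LD f H ∧ LD H K

lemma LD2.lap {f K} (h : LD2 f K) {x : E4} (hx : x ≠ 0) :
    laplacianE (laplacianE f) x = K x := by
  obtain ⟨H, h1, h2⟩ := h
  rw [lap_congr1 (fun y hy => h1.lap hy) hx]
  exact h2.lap hx

lemma LD2.add {f₁ f₂ K₁ K₂} (h₁ : LD2 f₁ K₁) (h₂ : LD2 f₂ K₂) :
    LD2 (fun y => f₁ y + f₂ y) (fun y => K₁ y + K₂ y) := by
  obtain ⟨H₁, a₁, b₁⟩ := h₁; obtain ⟨H₂, a₂, b₂⟩ := h₂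
  exact ⟨fun y => H₁ y + H₂ y, a₁.add a₂, b₁.add b₂⟩

lemma LD2.smul (c : ℝ) {f K} (h : LD2 f K) : LD2 (fun y => c * f y) (fun y => c * K y) := by
  obtain ⟨H, a, b⟩ := h
  exact ⟨fun y => c * H y, a.smul c, b.smul c⟩

lemma LD2.zero : LD2 (fun _ => 0) (fun _ => 0) := ⟨fun _ => 0, LD.zero, LD.zero⟩

lemma LD2.sum {ι : Type*} (s : Finset ι) {f K : ι → E4 → ℝ}
    (h : ∀ k ∈ s, LD2 (f k) (K k)) :
    LD2 (fun y => ∑ k ∈ s, f k y) (fun y => ∑ k ∈ s, K k y) := by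
  classical
  induction s using Finset.induction with
  | empty =>
    simp only [Finset.sum_empty]
    exact LD2.zero
  | @insert k s' hk ih =>
    simp only [Finset.sum_insert hk]
    exact (h k (Finset.mem_insert_self _ _)).add
      (ih (fun j hj => h j (Finset.mem_insert_of_mem hj)))

lemma LD2.congr_fun {f f' K} (h : LD2 f K) (e : ∀ y : E4, y ≠ 0 → f y = f' y) : LD2 f' K := by
  obtain ⟨H, a, b⟩ := h; exact ⟨H, a.congr_fun e, b⟩

lemma LD2.congr_K {f K K'} (h : LD2 f K) (e : ∀ y : E4, y ≠ 0 → K y = K' y) : LD2 f K' := by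
  obtain ⟨H, a, b⟩ := h; exact ⟨H, a, b.congr_L e⟩

lemma usq_ne' : ∀ y : E4, y ≠ 0 → usq y ≠ 0 := fun _ hy => usq_ne hy

lemma Hw : HG (fun y => usq y * Real.log (usq y) / 2)
    (fun y j => y j * (Real.log (usq y) + 1)) := by
  refine HG.congr ((HG.usq.mul (HG.usq.log usq_ne')).div_const 2) ?_
  intro y hy j
  have h := usq_ne hy
  field_simp
  ring


lemma dd_self (i : Fin 4) : dd i i = 1 := by simp [dd]

lemma sum_dd (k : Fin 4) (f : Fin 4 → ℝ) : ∑ i, dd i k * f i = f k := by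
  simp [dd, ite_mul, Finset.sum_ite_eq']

lemma sum_eval (y : E4) (k l : Fin 4) (c₁ c₂ c₃ c₄ c₅ c₆ c₇ : ℝ) :
    ∑ i : Fin 4, (c₁ * (y i * y i) + c₂ + dd i k * (c₃ + c₄ * y i)
        + dd i l * (c₅ + c₆ * y i) + dd i k * (dd i l * c₇))
      = c₁ * usq y + 4 * c₂ + (c₃ + c₄ * y k) + (c₅ + c₆ * y l) + dd k l * c₇ := by
  simp only [Finset.sum_add_distrib, sum_dd, ← Finset.mul_sum, Finset.sum_const,
    Finset.card_univ, Fintype.card_fin, nsmul_eq_mul, usq]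
  push_cast
  ring

-- B1 : Δ²(u²) = 192
lemma B1 : LD2 (fun y => usq y * usq y) (fun _ => 192) := by
  refine ⟨fun y => 24 * usq y, ?_, ?_⟩
  · refine ⟨fun y j => 4 * usq y * y j, fun i y j => 4 * usq y * dd j i + y i * (4 * (2 * y j)),
      ?_, ?_, ?_⟩
    · refine HG.congr (HG.usq.mul HG.usq) ?_
      intro y hy j; ring
    · intro i
      exact (HG.smul 4 HG.usq).mul (HG.coord i)
    · intro y hy
      have e : ∀ i ∈ Finset.univ, 4 * usq y * dd i i + y i * (4 * (2 * y i))
          = 8 * (y i * y i) + 4 * usq y + dd i (0:Fin 4) * (0 + 0 * y i)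
            + dd i 0 * (0 + 0 * y i) + dd i 0 * (dd i 0 * 0) := fun i _ => by
        simp only [dd_self]; ring
      rw [Finset.sum_congr rfl e, sum_eval]
      ring
  · refine ⟨fun y j => 24 * (2 * y j), fun i y j => 24 * (2 * dd j i),
      HG.smul 24 HG.usq, fun i => HG.smul 24 (HG.smul 2 (HG.coord i)), ?_⟩
    intro y hy
    simp [dd]
    norm_num

-- B2 : Δ²(u log u / 2) = 16/u
lemma B2 : LD2 (fun y => usq y * Real.log (usq y) / 2) (fun y => 16 * (usq y)⁻¹) := by
  refine ⟨fun y => 4 * Real.log (usq y) + 6, ?_, ?_⟩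
  · refine ⟨fun y j => y j * (Real.log (usq y) + 1),
      fun i y j => y i * ((usq y)⁻¹ * (2 * y j) + 0) + (Real.log (usq y) + 1) * dd j i,
      Hw, ?_, ?_⟩
    · intro i
      exact (HG.coord i).mul ((HG.usq.log usq_ne').add (HG.const 1))
    · intro y hy
      have h := usq_ne hy
      have e : ∀ i ∈ Finset.univ, y i * ((usq y)⁻¹ * (2 * y i) + 0) + (Real.log (usq y) + 1) * dd i i
          = (2 * (usq y)⁻¹) * (y i * y i) + (Real.log (usq y) + 1) + dd i (0:Fin 4) * (0 + 0 * y i)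
            + dd i 0 * (0 + 0 * y i) + dd i 0 * (dd i 0 * 0) := fun i _ => by
        simp only [dd_self]; ring
      rw [Finset.sum_congr rfl e, sum_eval]
      field_simp
      ring
  · refine ⟨fun y j => 4 * ((usq y)⁻¹ * (2 * y j)) + 0,
      fun i y j => 4 * ((usq y)⁻¹ * (2 * dd j i) + 2 * y i * (-(usq y ^ 2)⁻¹ * (2 * y j))) + 0,
      (HG.smul 4 (HG.usq.log usq_ne')).add (HG.const 6), ?_, ?_⟩
    · intro i
      exact (HG.smul 4 ((HG.usq.inv usq_ne').mul (HG.smul 2 (HG.coord i)))).add (HG.const 0)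
    · intro y hy
      have h := usq_ne hy
      have e : ∀ i ∈ Finset.univ, 4 * ((usq y)⁻¹ * (2 * dd i i) + 2 * y i * (-(usq y ^ 2)⁻¹ * (2 * y i))) + 0
          = (-16 * (usq y ^ 2)⁻¹) * (y i * y i) + 8 * (usq y)⁻¹ + dd i (0:Fin 4) * (0 + 0 * y i)
            + dd i 0 * (0 + 0 * y i) + dd i 0 * (dd i 0 * 0) := fun i _ => by
        simp only [dd_self]; ring
      rw [Finset.sum_congr rfl e, sum_eval]
      field_simp
      ring

lemma LA : HG (fun y => Real.log (usq y) + 1) (fun y j => (usq y)⁻¹ * (2 * y j) + 0) :=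
  (HG.usq.log usq_ne').add (HG.const 1)

-- B3 : Δ²(y k * u log u / 2) = 48 y k / u
lemma B3 (k : Fin 4) : LD2 (fun y => y k * (usq y * Real.log (usq y) / 2))
    (fun y => 48 * y k * (usq y)⁻¹) := by
  refine ⟨fun y => y k * (6 * Real.log (usq y) + 8), ?_, ?_⟩
  · refine ⟨fun y j => y k * (y j * (Real.log (usq y) + 1))
        + usq y * Real.log (usq y) / 2 * dd j k, _,
      (HG.coord k).mul Hw,
      fun i => ((HG.coord k).mul ((HG.coord i).mul LA)).add (Hw.mul (HG.const (dd i k))),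
      ?_⟩
    intro y hy
    have h := usq_ne hy
    have e : ∀ i ∈ Finset.univ,
        y k * (y i * ((usq y)⁻¹ * (2 * y i) + 0) + (Real.log (usq y) + 1) * dd i i)
          + (y i * (Real.log (usq y) + 1)) * dd i k
          + (usq y * Real.log (usq y) / 2 * 0 + dd i k * (y i * (Real.log (usq y) + 1)))
        = (2 * (usq y)⁻¹ * y k) * (y i * y i) + y k * (Real.log (usq y) + 1)
          + dd i k * (0 + (2 * (Real.log (usq y) + 1)) * y i)
          + dd i k * (0 + 0 * y i) + dd i k * (dd i k * 0) := fun i _ => by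
      simp only [dd_self]; ring
    rw [Finset.sum_congr rfl e, sum_eval]
    field_simp
    ring
  · refine ⟨fun y j => y k * (6 * ((usq y)⁻¹ * (2 * y j)) + 0)
        + (6 * Real.log (usq y) + 8) * dd j k, _,
      (HG.coord k).mul ((HG.smul 6 (HG.usq.log usq_ne')).add (HG.const 8)),
      fun i => ((HG.coord k).mul
          ((HG.smul 6 ((HG.usq.inv usq_ne').mul (HG.smul 2 (HG.coord i)))).add (HG.const 0))).add
        (((HG.smul 6 (HG.usq.log usq_ne')).add (HG.const 8)).mul (HG.const (dd i k))),
      ?_⟩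
    intro y hy
    have h := usq_ne hy
    have e : ∀ i ∈ Finset.univ,
        (y k * (6 * ((usq y)⁻¹ * (2 * dd i i) + 2 * y i * (-(usq y ^ 2)⁻¹ * (2 * y i))) + 0)
          + (6 * ((usq y)⁻¹ * (2 * y i)) + 0) * dd i k)
          + ((6 * Real.log (usq y) + 8) * 0 + dd i k * (6 * ((usq y)⁻¹ * (2 * y i)) + 0))
        = (-24 * (usq y ^ 2)⁻¹ * y k) * (y i * y i) + 12 * (usq y)⁻¹ * y k
          + dd i k * (0 + (24 * (usq y)⁻¹) * y i)
          + dd i k * (0 + 0 * y i) + dd i k * (dd i k * 0) := fun i _ => by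
      simp only [dd_self]; ring
    rw [Finset.sum_congr rfl e, sum_eval]
    field_simp
    ring

-- B4 : Δ²(y k * y l * u log u / 2)
lemma B4 (k l : Fin 4) : LD2 (fun y => y k * (y l * (usq y * Real.log (usq y) / 2)))
    (fun y => dd k l * (24 * Real.log (usq y) + 32) + 96 * (y k * y l) * (usq y)⁻¹) := by
  refine ⟨fun y => dd k l * (usq y * Real.log (usq y))
      + y k * y l * (8 * Real.log (usq y) + 10), ?_, ?_⟩
  · refine ⟨fun y j => y k * (y l * (y j * (Real.log (usq y) + 1))
        + usq y * Real.log (usq y) / 2 * dd j l)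
        + y l * (usq y * Real.log (usq y) / 2) * dd j k, _,
      (HG.coord k).mul ((HG.coord l).mul Hw),
      fun i => (((HG.coord k).mul
          (((HG.coord l).mul ((HG.coord i).mul LA)).add (Hw.mul (HG.const (dd i l))))).add
        (((HG.coord l).mul Hw).mul (HG.const (dd i k)))),
      ?_⟩
    intro y hy
    have h := usq_ne hy
    have e : ∀ i ∈ Finset.univ,
        (y k * ((y l * (y i * ((usq y)⁻¹ * (2 * y i) + 0) + (Real.log (usq y) + 1) * dd i i)
            + (y i * (Real.log (usq y) + 1)) * dd i l)
          + (usq y * Real.log (usq y) / 2 * 0 + dd i l * (y i * (Real.log (usq y) + 1))))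
          + (y l * (y i * (Real.log (usq y) + 1)) + usq y * Real.log (usq y) / 2 * dd i l) * dd i k
            + ((y l * (usq y * Real.log (usq y) / 2)) * 0
              + dd i k * (y l * (y i * (Real.log (usq y) + 1))
                + usq y * Real.log (usq y) / 2 * dd i l)))
        = (2 * (usq y)⁻¹ * (y k * y l)) * (y i * y i) + y k * y l * (Real.log (usq y) + 1)
          + dd i k * (0 + (2 * y l * (Real.log (usq y) + 1)) * y i)
          + dd i l * (0 + (2 * y k * (Real.log (usq y) + 1)) * y i)
          + dd i k * (dd i l * (usq y * Real.log (usq y))) := fun i _ => by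
      simp only [dd_self]; ring
    rw [Finset.sum_congr rfl e, sum_eval]
    field_simp
    ring
  · refine ⟨fun y j => dd k l * (usq y * ((usq y)⁻¹ * (2 * y j)) + Real.log (usq y) * (2 * y j))
        + (y k * y l * (8 * ((usq y)⁻¹ * (2 * y j)) + 0)
          + (8 * Real.log (usq y) + 10) * (y k * dd j l + y l * dd j k)), _,
      (HG.smul (dd k l) ((HG.usq.mul ((HG.usq.log usq_ne'))).congr
          (fun y hy j => rfl))).add
        (((HG.coord k).mul (HG.coord l)).mul ((HG.smul 8 (HG.usq.log usq_ne')).add (HG.const 10))),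
      fun i => (HG.smul (dd k l)
          ((HG.usq.mul ((HG.usq.inv usq_ne').mul (HG.smul 2 (HG.coord i)))).add
            ((HG.usq.log usq_ne').mul (HG.smul 2 (HG.coord i))))).add
        ((((HG.coord k).mul (HG.coord l)).mul
            ((HG.smul 8 ((HG.usq.inv usq_ne').mul (HG.smul 2 (HG.coord i)))).add (HG.const 0))).add
          ((((HG.smul 8 (HG.usq.log usq_ne')).add (HG.const 10)).mul
            (((HG.coord k).mul (HG.const (dd i l))).add ((HG.coord l).mul (HG.const (dd i k))))))),
      ?_⟩
    intro y hy
    have h := usq_ne hy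
    have e : ∀ i ∈ Finset.univ,
        dd k l * ((usq y * ((usq y)⁻¹ * (2 * dd i i) + 2 * y i * (-(usq y ^ 2)⁻¹ * (2 * y i)))
            + ((usq y)⁻¹ * (2 * y i)) * (2 * y i))
          + (Real.log (usq y) * (2 * dd i i) + 2 * y i * ((usq y)⁻¹ * (2 * y i))))
          + ((y k * y l * (8 * ((usq y)⁻¹ * (2 * dd i i)
                + 2 * y i * (-(usq y ^ 2)⁻¹ * (2 * y i))) + 0)
              + (8 * ((usq y)⁻¹ * (2 * y i)) + 0) * (y k * dd i l + y l * dd i k))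
            + ((8 * Real.log (usq y) + 10) * ((y k * 0 + dd i l * dd i k)
                + (y l * 0 + dd i k * dd i l))
              + (y k * dd i l + y l * dd i k) * (8 * ((usq y)⁻¹ * (2 * y i)) + 0)))
        = (dd k l * (usq y * (-4 * (usq y ^ 2)⁻¹) + 8 * (usq y)⁻¹)
              + (-32) * (usq y ^ 2)⁻¹ * (y k * y l)) * (y i * y i)
          + (dd k l * (usq y * (usq y)⁻¹ * 2 + 2 * Real.log (usq y))
              + 16 * (usq y)⁻¹ * (y k * y l))
          + dd i k * (0 + (32 * (usq y)⁻¹ * y l) * y i)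
          + dd i l * (0 + (32 * (usq y)⁻¹ * y k) * y i)
          + dd i k * (dd i l * (2 * (8 * Real.log (usq y) + 10))) := fun i _ => by
      simp only [dd_self]; ring
    rw [Finset.sum_congr rfl e, sum_eval]
    field_simp
    ring

lemma norm_rpow_neg_two {x : E4} (hx : x ≠ 0) : ‖x‖ ^ (-2 : ℝ) = (usq x)⁻¹ := by
  have h : ‖x‖ ^ (-2 : ℝ) = (‖x‖ ^ (2:ℕ))⁻¹ := by
    rw [← Real.rpow_natCast ‖x‖ 2, ← Real.rpow_neg (norm_nonneg x)]
    norm_num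
  rw [h, norm_sq_eq]

lemma main_LD2 (a₀ C : ℝ) (A : Fin 4 → Fin 4 → ℝ) (B : Fin 4 → ℝ) :
    LD2 (fun y => ((a₀ * (usq y * usq y)
        + ∑ k, ∑ l, A k l * (y k * (y l * (usq y * Real.log (usq y) / 2))))
        + ∑ k, B k * (y k * (usq y * Real.log (usq y) / 2)))
        + C * (usq y * Real.log (usq y) / 2))
      (fun y => ((a₀ * 192
        + ∑ k, ∑ l, A k l * (dd k l * (24 * Real.log (usq y) + 32) + 96 * (y k * y l) * (usq y)⁻¹))
        + ∑ k, B k * (48 * y k * (usq y)⁻¹))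
        + C * (16 * (usq y)⁻¹)) := by
  refine (((B1.smul a₀).add ?_).add ?_).add (B2.smul C)
  · exact LD2.sum Finset.univ fun k _ => LD2.sum Finset.univ fun l _ => (B4 k l).smul (A k l)
  · exact LD2.sum Finset.univ fun k _ => (B3 k).smul (B k)

end

set_option maxHeartbeats 1000000 in
theorem exists_solution_beta_neg_half' (a : Fin 4 → Fin 4 → ℝ) (b : Fin 4 → ℝ) (c : ℝ) :
    ∃ (a₀ : ℝ) (a' : Fin 4 → Fin 4 → ℝ) (b' : Fin 4 → ℝ) (c' : ℝ),
      ∀ x : EuclideanSpace ℝ (Fin 4), x ≠ 0 →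
        laplacianE (laplacianE
            (fun y =>
              (a₀ * ‖y‖ ^ 2 +
                  ((∑ i, ∑ j, a' i j * y i * y j) + (∑ i, b' i * y i) + c') *
                    Real.log ‖y‖) * ‖y‖ ^ 2)) x =
          ((∑ i, ∑ j, a i j * x i * x j) + (∑ i, b i * x i) + c) * ‖x‖ ^ (-2 : ℝ) := by
  refine ⟨(a 0 0 + a 1 1 + a 2 2 + a 3 3) / 768,
    fun i j => a i j / 96 - (if i = j then (a 0 0 + a 1 1 + a 2 2 + a 3 3) / 384 else 0),
    fun i => b i / 48, c / 16, fun x hx => ?_⟩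
  have hld := (main_LD2 ((a 0 0 + a 1 1 + a 2 2 + a 3 3) / 768) (c / 16)
      (fun i j => a i j / 96 - (if i = j then (a 0 0 + a 1 1 + a 2 2 + a 3 3) / 384 else 0))
      (fun i => b i / 48))
  have hld2 := (hld.congr_fun (f' := fun y =>
      ((a 0 0 + a 1 1 + a 2 2 + a 3 3) / 768 * ‖y‖ ^ 2 +
        ((∑ i, ∑ j, (a i j / 96 - (if i = j then (a 0 0 + a 1 1 + a 2 2 + a 3 3) / 384 else 0))
            * y i * y j)
          + (∑ i, b i / 48 * y i) + c / 16) * Real.log ‖y‖) * ‖y‖ ^ 2) ?_).congr_K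
    (K' := fun x => ((∑ i, ∑ j, a i j * x i * x j) + (∑ i, b i * x i) + c) * ‖x‖ ^ (-2 : ℝ)) ?_
  · exact hld2.lap hx
  · intro y hy
    simp only [norm_sq_eq, log_norm hy, Fin.sum_univ_four]
    ring
  · intro y hy
    have h := usq_ne hy
    have hv : usq y * (usq y)⁻¹ = 1 := mul_inv_cancel₀ h
    simp only []
    rw [norm_rpow_neg_two hy]
    rw [show usq y = y 0 * y 0 + y 1 * y 1 + y 2 * y 2 + y 3 * y 3 from by
      rw [usq, Fin.sum_univ_four]] at hv ⊢
    simp only [Fin.sum_univ_four, dd, Fin.reduceEq, reduceIte]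
    linear_combination (-((a 0 0 + a 1 1 + a 2 2 + a 3 3) / 4)) * hv


/-- The case `β = -1/2`: for every quadratic polynomial
`f(x) = Σ aᵢⱼxᵢxⱼ + Σ bᵢxᵢ + c` on `ℝ⁴` there exist constants `a₀, ãᵢⱼ, b̃ᵢ, c̃` such
that `q(x) = a₀|x|² + (Σ ãᵢⱼxᵢxⱼ + Σ b̃ᵢxᵢ + c̃)log|x|` satisfies
`Δ²(q(x)|x|²) = f(x)|x|^{-2}` away from the origin. -/
theorem exists_solution_beta_neg_half (a : Fin 4 → Fin 4 → ℝ) (b : Fin 4 → ℝ) (c : ℝ) :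
    ∃ (a₀ : ℝ) (a' : Fin 4 → Fin 4 → ℝ) (b' : Fin 4 → ℝ) (c' : ℝ),
      ∀ x : EuclideanSpace ℝ (Fin 4), x ≠ 0 →
        laplacianE (laplacianE
            (fun y =>
              (a₀ * ‖y‖ ^ 2 +
                  ((∑ i, ∑ j, a' i j * y i * y j) + (∑ i, b' i * y i) + c') *
                    Real.log ‖y‖) * ‖y‖ ^ 2)) x =
          ((∑ i, ∑ j, a i j * x i * x j) + (∑ i, b i * x i) + c) * ‖x‖ ^ (-2 : ℝ) := by
  exact exists_solution_beta_neg_half' a b c
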